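/- Let m ≥ 1 be an integer, a < b real numbers, and f : [a,b] → ℝ of class C^{m+1}. Assume ξ := min_{x∈[a,b]} max_{1≤d≤m} |f^{(d)}(x)|/d! > 0, and set M := max_{x∈[a,b], 2≤d≤m+1} |f^{(d)}(x)|/d!. Then for every 0 < μ < 1 the Lebesgue measure of {x ∈ [a,b] : |f(x)| ≤ μ} is at most (m(M+1)(b−a+2μ^{1/(m+1)})/ξ)·μ^{1/(m(m+1))}. -/

import Mathlib

open Set MeasureTheory Polynomial


lemma gaps_pairwise {n : ℕ} {g : ℝ} (hg : 0 ≤ g) (x : Fin (n + 1) → ℝ)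
    (hx : ∀ i : Fin n, x i.castSucc + g ≤ x i.succ) :
    ∀ i j : Fin (n + 1), i < j → x i + g ≤ x j := by
  intro i j hij
  induction j using Fin.induction with
  | zero => exact absurd hij (by simp [Fin.lt_def])
  | succ k ih =>
    rcases lt_or_eq_of_le (Fin.le_castSucc_iff.mpr hij) with h | h
    · calc x i + g ≤ x k.castSucc := ih h
        _ ≤ x k.castSucc + g := le_add_of_nonneg_right hg
        _ ≤ x k.succ := hx k
    · rw [h]; exact hx k

lemma zero_chain : ∀ (n : ℕ) (A B : ℝ) (G : ℕ → ℝ → ℝ),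
    (∀ k, k ≤ n → ContinuousOn (G k) (Icc A B)) →
    (∀ k, k < n → ∀ t ∈ Ioo A B, HasDerivAt (G k) (G (k + 1) t) t) →
    ∀ y : Fin (n + 1) → ℝ, StrictMono y → (∀ i, y i ∈ Icc A B) →
      (∀ i, G 0 (y i) = 0) →
      ∃ ζ ∈ Icc (y 0) (y (Fin.last n)), G n ζ = 0 := by
  intro n
  induction n with
  | zero =>
    intro A B G _ _ y _ _ hz
    exact ⟨y 0, ⟨le_refl _, le_of_eq rfl⟩, hz 0⟩
  | succ n ih =>
    intro A B G hc hd y hy hmem hz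
    have key : ∀ i : Fin (n + 1), ∃ z ∈ Ioo (y i.castSucc) (y i.succ), G 1 z = 0 := by
      intro i
      have hlt : y i.castSucc < y i.succ := hy Fin.castSucc_lt_succ
      have hsub : Icc (y i.castSucc) (y i.succ) ⊆ Icc A B :=
        Icc_subset_Icc (hmem i.castSucc).1 (hmem i.succ).2
      have hsub' : Ioo (y i.castSucc) (y i.succ) ⊆ Ioo A B := fun t ht =>
        ⟨lt_of_le_of_lt (hmem i.castSucc).1 ht.1, lt_of_lt_of_le ht.2 (hmem i.succ).2⟩
      exact exists_hasDerivAt_eq_zero hlt ((hc 0 (Nat.zero_le _)).mono hsub)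
        ((hz i.castSucc).trans (hz i.succ).symm)
        (fun t ht => hd 0 (Nat.succ_pos n) t (hsub' ht))
    choose z hz1 hz2 using key
    have hzmem : ∀ i, z i ∈ Icc A B := fun i =>
      ⟨le_of_lt (lt_of_le_of_lt (hmem i.castSucc).1 (hz1 i).1),
       le_of_lt (lt_of_lt_of_le (hz1 i).2 (hmem i.succ).2)⟩
    have hzmono : StrictMono z := by
      intro i j hij
      calc z i < y i.succ := (hz1 i).2
        _ ≤ y j.castSucc := hy.monotone (by
            rw [Fin.le_def, Fin.val_succ, Fin.coe_castSucc]
            exact hij)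
        _ < z j := (hz1 j).1
    obtain ⟨ζ, hζ1, hζ2⟩ := ih A B (fun k => G (k + 1))
      (fun k hk => hc (k + 1) (by omega))
      (fun k hk t ht => hd (k + 1) (by omega) t ht) z hzmono hzmem hz2
    refine ⟨ζ, ⟨?_, ?_⟩, hζ2⟩
    · exact le_trans (le_of_lt (lt_of_le_of_lt (hy.monotone (Fin.zero_le _)) (hz1 0).1)) hζ1.1
    · refine le_trans hζ1.2 (le_of_lt (lt_of_lt_of_le (hz1 (Fin.last n)).2 ?_))
      exact hy.monotone (by rw [Fin.le_def]; simp)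


lemma polyiter : ∀ (d : ℕ) (p : Polynomial ℝ), p.natDegree ≤ d →
    ∀ t, (Polynomial.derivative^[d] p).eval t = (Nat.factorial d : ℝ) * p.coeff d := by
  intro d
  induction d with
  | zero =>
    intro p hp t
    rw [Function.iterate_zero_apply, eq_C_of_natDegree_le_zero hp]
    simp
  | succ d ih =>
    intro p hp t
    rw [Function.iterate_succ_apply]
    have h1 : (derivative p).natDegree ≤ d := by
      have := natDegree_derivative_le p
      omega
    rw [ih (derivative p) h1 t, coeff_derivative, Nat.factorial_succ]
    push_cast
    ring

lemma divdiff (a b : ℝ) (hab : a < b) (f : ℝ → ℝ) (m : ℕ)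
    (hf : ContDiffOn ℝ (m + 1 : ℕ) f (Set.Icc a b)) (d : ℕ) (hd : d ≤ m)
    (y : Fin (d + 1) → ℝ) (hy : StrictMono y) (hmem : ∀ i, y i ∈ Set.Icc a b) :
    ∃ ζ ∈ Set.Icc (y 0) (y (Fin.last d)),
      iteratedDerivWithin d f (Set.Icc a b) ζ =
        (Nat.factorial d : ℝ) *
          ∑ j, f (y j) * (∏ i ∈ Finset.univ.erase j, (y j - y i))⁻¹ := by
  have hUD := uniqueDiffOn_Icc hab
  set w : Fin (d + 1) → ℝ :=
    fun j => f (y j) * (∏ i ∈ Finset.univ.erase j, (y j - y i))⁻¹ with hw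
  set N : Fin (d + 1) → Polynomial ℝ :=
    fun j => ∏ i ∈ Finset.univ.erase j, (X - C (y i)) with hN
  set L : Polynomial ℝ := ∑ j, C (w j) * N j with hL
  have hNdeg : ∀ j, (N j).natDegree = d := by
    intro j
    rw [hN, natDegree_prod _ _ (fun i _ => X_sub_C_ne_zero (y i))]
    simp [Finset.card_erase_of_mem]
  have hNmonic : ∀ j, (N j).Monic :=
    fun j => monic_prod_of_monic _ _ (fun i _ => monic_X_sub_C (y i))
  have hLdeg : L.natDegree ≤ d := by
    apply natDegree_sum_le_of_forall_le
    intro j _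
    exact le_trans (natDegree_C_mul_le _ _) (le_of_eq (hNdeg j))
  have hcoeff : L.coeff d = ∑ j, w j := by
    rw [hL, finset_sum_coeff]
    congr 1
    ext j
    rw [coeff_C_mul]
    have : (N j).coeff d = 1 := by
      have := (hNmonic j).coeff_natDegree
      rwa [hNdeg j] at this
    rw [this, mul_one]
  have hprodne : ∀ j, (∏ i ∈ Finset.univ.erase j, (y j - y i)) ≠ 0 := by
    intro j
    rw [Finset.prod_ne_zero_iff]
    intro i hi
    exact sub_ne_zero_of_ne (fun h => (Finset.mem_erase.mp hi).1 (hy.injective h.symm))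
  have hLval : ∀ l, L.eval (y l) = f (y l) := by
    intro l
    rw [hL, eval_finset_sum]
    have : ∀ j, eval (y l) (C (w j) * N j) = w j * ∏ i ∈ Finset.univ.erase j, (y l - y i) := by
      intro j
      rw [eval_mul, eval_C, hN, eval_prod]
      simp
    rw [Finset.sum_congr rfl (fun j _ => this j)]
    rw [Finset.sum_eq_single l]
    · rw [hw, mul_assoc, inv_mul_cancel₀ (hprodne l), mul_one]
    · intro j _ hj
      rw [Finset.prod_eq_zero (Finset.mem_erase.mpr ⟨hj.symm, Finset.mem_univ l⟩), mul_zero]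
      simp
    · intro h; exact absurd (Finset.mem_univ l) h
  set F : ℕ → ℝ → ℝ := fun k => iteratedDerivWithin k f (Set.Icc a b) with hF
  set G : ℕ → ℝ → ℝ := fun k t => F k t - (Polynomial.derivative^[k] L).eval t with hG
  have hsubI : Icc (y 0) (y (Fin.last d)) ⊆ Icc a b :=
    Icc_subset_Icc (hmem 0).1 (hmem (Fin.last d)).2
  have hc : ∀ k, k ≤ d → ContinuousOn (G k) (Icc (y 0) (y (Fin.last d))) := by
    intro k hk
    apply ContinuousOn.sub
    · exact (hf.continuousOn_iteratedDerivWithin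
        (by exact_mod_cast (by omega : k ≤ m + 1)) hUD).mono hsubI
    · exact (Polynomial.continuous _).continuousOn
  have hder : ∀ k, k < d → ∀ t ∈ Ioo (y 0) (y (Fin.last d)), HasDerivAt (G k) (G (k + 1) t) t := by
    intro k hk t ht
    have hta : a < t := lt_of_le_of_lt (hmem 0).1 ht.1
    have htb : t < b := lt_of_lt_of_le ht.2 (hmem (Fin.last d)).2
    have htIcc : t ∈ Icc a b := ⟨le_of_lt hta, le_of_lt htb⟩
    have hnh : Icc a b ∈ nhds t := Icc_mem_nhds hta htb
    have hdiff : DifferentiableOn ℝ (F k) (Icc a b) :=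
      hf.differentiableOn_iteratedDerivWithin (by exact_mod_cast (by omega : k < m + 1)) hUD
    have h2 : DifferentiableAt ℝ (F k) t := (hdiff t htIcc).differentiableAt hnh
    have h3 : F (k + 1) t = deriv (F k) t := by
      show iteratedDerivWithin (k + 1) f (Set.Icc a b) t = deriv (iteratedDerivWithin k f (Set.Icc a b)) t
      rw [iteratedDerivWithin_succ]
      exact derivWithin_of_mem_nhds hnh
    have h4 : HasDerivAt (F k) (F (k + 1) t) t := h3 ▸ h2.hasDerivAt
    have h5 : HasDerivAt (fun s => (Polynomial.derivative^[k] L).eval s)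
        ((Polynomial.derivative^[k + 1] L).eval t) t := by
      rw [Function.iterate_succ_apply']
      exact Polynomial.hasDerivAt _ t
    exact h4.sub h5
  have hzeros : ∀ i, G 0 (y i) = 0 := by
    intro i
    rw [hG]
    simp only [Function.iterate_zero_apply, hF, iteratedDerivWithin_zero]
    rw [hLval i]
    ring
  obtain ⟨ζ, hζ1, hζ2⟩ := zero_chain d (y 0) (y (Fin.last d)) G hc hder y hy
    (fun i => ⟨hy.monotone (Fin.zero_le i), hy.monotone (Fin.le_last i)⟩) hzeros
  refine ⟨ζ, hζ1, ?_⟩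
  have h7 : iteratedDerivWithin d f (Set.Icc a b) ζ = (Polynomial.derivative^[d] L).eval ζ :=
    sub_eq_zero.mp hζ2
  rw [h7, polyiter d L hLdeg ζ, hcoeff]

lemma greedy {g : ℝ} (hg : 0 < g) : ∀ (n : ℕ) (S : Set ℝ), IsClosed S → BddBelow S →
    volume S ≤ ENNReal.ofReal (n * g) ∨
      ∃ x : Fin (n + 1) → ℝ, (∀ i, x i ∈ S) ∧ ∀ i : Fin n, x i.castSucc + g ≤ x i.succ := by
  intro n
  induction n with
  | zero =>
    intro S hS hB
    rcases eq_empty_or_nonempty S with h | ⟨p, hp⟩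
    · left; simp [h]
    · right
      exact ⟨fun _ => p, fun _ => hp, fun i => absurd i.2 (by omega)⟩
  | succ n ih =>
    intro S hS hB
    rcases eq_empty_or_nonempty S with h | hne
    · left; simp [h]
    have h0 : sInf S ∈ S := hS.csInf_mem hne hB
    set s0 := sInf S with hs0
    set S' := S ∩ Ici (s0 + g) with hS'
    have hS'c : IsClosed S' := hS.inter isClosed_Ici
    have hS'b : BddBelow S' := hB.mono inter_subset_left
    rcases ih S' hS'c hS'b with hvol | ⟨x', hx'1, hx'2⟩
    · left
      have hsub : S ⊆ Ico s0 (s0 + g) ∪ S' := by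
        intro t ht
        rcases lt_or_ge t (s0 + g) with h | h
        · exact Or.inl ⟨csInf_le hB ht, h⟩
        · exact Or.inr ⟨ht, h⟩
      calc volume S ≤ volume (Ico s0 (s0 + g) ∪ S') := measure_mono hsub
        _ ≤ volume (Ico s0 (s0 + g)) + volume S' := measure_union_le _ _
        _ ≤ ENNReal.ofReal g + ENNReal.ofReal (n * g) := by
            rw [Real.volume_Ico]
            exact add_le_add (by rw [add_sub_cancel_left]) hvol
        _ = ENNReal.ofReal ((n + 1 : ℕ) * g) := by
            rw [← ENNReal.ofReal_add (le_of_lt hg) (by positivity)]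
            congr 1
            push_cast
            ring
    · right
      refine ⟨Fin.cons s0 x', ?_, ?_⟩
      · intro i
        induction i using Fin.cases with
        | zero => simpa using h0
        | succ j => simpa using (hx'1 j).1
      · intro i
        induction i using Fin.cases with
        | zero =>
          simpa using (hx'1 0).2
        | succ j =>
          have h1 : (Fin.cons s0 x' : Fin (n+2) → ℝ) j.succ.castSucc = x' j.castSucc := by
            rw [Fin.castSucc_fin_succ]
            simp
          have h2 : (Fin.cons s0 x' : Fin (n+2) → ℝ) j.succ.succ = x' j.succ := by
            simp [Fin.cons_succ]
          rw [h1, h2]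
          exact hx'2 j

lemma keyest (m : ℕ) (a b : ℝ) (hab : a < b) (f : ℝ → ℝ)
    (hf : ContDiffOn ℝ (m + 1 : ℕ) f (Set.Icc a b))
    (ξ M μ : ℝ)
    (hξ' : ∀ x ∈ Set.Icc a b, ∃ d : ℕ, 1 ≤ d ∧ d ≤ m ∧
      ξ ≤ |iteratedDerivWithin d f (Set.Icc a b) x| / (Nat.factorial d : ℝ))
    (hM : ∀ x ∈ Set.Icc a b, ∀ d : ℕ, 2 ≤ d → d ≤ m + 1 →
      |iteratedDerivWithin d f (Set.Icc a b) x| / (Nat.factorial d : ℝ) ≤ M)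
    (hM0 : 0 ≤ M) (g r : ℝ) (hg : 0 < g) (hr : 0 ≤ r)
    (x : Fin (m + 1) → ℝ)
    (hxab : ∀ i, x i ∈ Set.Icc a b) (hxμ : ∀ i, |f (x i)| ≤ μ)
    (hgap : ∀ i : Fin m, x i.castSucc + g ≤ x i.succ)
    (u v : ℝ) (hxu : ∀ i, x i ∈ Set.Icc u v) (hlen : v - u ≤ 2 * r) :
    ∃ d : ℕ, 1 ≤ d ∧ d ≤ m ∧
      ξ ≤ (d + 1) * μ / g ^ d + (d + 1) * M * (2 * r) := by
  have hUD := uniqueDiffOn_Icc hab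
  have hpw := gaps_pairwise (le_of_lt hg) x hgap
  have hxsm : StrictMono x := fun i j hij => by nlinarith [hpw i j hij]
  have hμ0 : 0 ≤ μ := le_trans (abs_nonneg _) (hxμ 0)
  obtain ⟨d, hd1, hd2, hξd⟩ := hξ' (x 0) (hxab 0)
  refine ⟨d, hd1, hd2, ?_⟩
  set y : Fin (d + 1) → ℝ := fun i => x (Fin.castLE (by omega) i) with hy
  have hysm : StrictMono y := fun i j hij => hxsm (by
    simp only [Fin.lt_def, Fin.coe_castLE]
    exact hij)
  have hymem : ∀ i, y i ∈ Set.Icc a b := fun i => hxab _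
  obtain ⟨ζ, hζmem, hζeq⟩ := divdiff a b hab f m hf d hd2 y hysm hymem
  have hζab : ζ ∈ Set.Icc a b :=
    ⟨le_trans (hymem 0).1 hζmem.1, le_trans hζmem.2 (hymem (Fin.last d)).2⟩
  have hy0 : y 0 = x 0 := by rw [hy]; congr 1
  -- bound on each summand
  have hterm : ∀ j : Fin (d + 1),
      |f (y j) * (∏ i ∈ Finset.univ.erase j, (y j - y i))⁻¹| ≤ μ / g ^ d := by
    intro j
    have hprodge : g ^ d ≤ |∏ i ∈ Finset.univ.erase j, (y j - y i)| := by
      rw [Finset.abs_prod]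
      have hcard : (Finset.univ.erase j).card = d := by
        rw [Finset.card_erase_of_mem (Finset.mem_univ j)]
        simp
      calc g ^ d = ∏ _i ∈ Finset.univ.erase j, g := by
            rw [Finset.prod_const, hcard]
        _ ≤ ∏ i ∈ Finset.univ.erase j, |y j - y i| := by
            apply Finset.prod_le_prod (fun _ _ => le_of_lt hg)
            intro i hi
            have hij : i ≠ j := (Finset.mem_erase.mp hi).1
            have h1 : Fin.castLE (by omega : d + 1 ≤ m + 1) i ≠ Fin.castLE (by omega) j := by
              intro h; exact hij (Fin.castLE_injective _ h)
            rcases lt_or_gt_of_ne h1 with h | h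
            · have := hpw _ _ h
              rw [abs_of_nonneg (by simp only [hy]; linarith)]
              simp only [hy]; linarith
            · have := hpw _ _ h
              rw [abs_of_nonpos (by simp only [hy]; linarith)]
              simp only [hy]; linarith
    have hgd : (0:ℝ) < g ^ d := pow_pos hg d
    rw [abs_mul, abs_inv]
    have h2 : |∏ i ∈ Finset.univ.erase j, (y j - y i)|⁻¹ ≤ (g ^ d)⁻¹ :=
      inv_anti₀ hgd hprodge
    calc |f (y j)| * |∏ i ∈ Finset.univ.erase j, (y j - y i)|⁻¹
        ≤ μ * (g ^ d)⁻¹ := by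
          apply mul_le_mul (hxμ _) h2 (inv_nonneg.mpr (abs_nonneg _)) hμ0
      _ = μ / g ^ d := by rw [div_eq_mul_inv]
  have hsum : |∑ j, f (y j) * (∏ i ∈ Finset.univ.erase j, (y j - y i))⁻¹|
      ≤ (d + 1) * (μ / g ^ d) := by
    calc |∑ j, f (y j) * (∏ i ∈ Finset.univ.erase j, (y j - y i))⁻¹|
        ≤ ∑ j, |f (y j) * (∏ i ∈ Finset.univ.erase j, (y j - y i))⁻¹| :=
          Finset.abs_sum_le_sum_abs _ _
      _ ≤ ∑ _j : Fin (d + 1), μ / g ^ d := Finset.sum_le_sum (fun j _ => hterm j)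
      _ = (d + 1) * (μ / g ^ d) := by
          rw [Finset.sum_const, Finset.card_univ]
          simp [nsmul_eq_mul]
  have hfact : (0:ℝ) < (Nat.factorial d : ℝ) := by
    exact_mod_cast Nat.factorial_pos d
  have hζbd : |iteratedDerivWithin d f (Set.Icc a b) ζ|
      ≤ (Nat.factorial d : ℝ) * ((d + 1) * (μ / g ^ d)) := by
    rw [hζeq, abs_mul, abs_of_pos hfact]
    exact mul_le_mul_of_nonneg_left hsum (le_of_lt hfact)
  -- transfer from ζ to x 0
  have hderbd : ∀ t ∈ Set.Icc a b,
      ‖derivWithin (iteratedDerivWithin d f (Set.Icc a b)) (Set.Icc a b) t‖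
        ≤ (Nat.factorial (d + 1) : ℝ) * M := by
    intro t ht
    have h1 : derivWithin (iteratedDerivWithin d f (Set.Icc a b)) (Set.Icc a b) t
        = iteratedDerivWithin (d + 1) f (Set.Icc a b) t :=
      (congrFun iteratedDerivWithin_succ t).symm
    rw [h1]
    have h2 := hM t ht (d + 1) (by omega) (by omega)
    have h3 : (0:ℝ) < (Nat.factorial (d + 1) : ℝ) := by
      exact_mod_cast Nat.factorial_pos (d + 1)
    rw [Real.norm_eq_abs]
    calc |iteratedDerivWithin (d + 1) f (Set.Icc a b) t|
        = |iteratedDerivWithin (d + 1) f (Set.Icc a b) t| / (Nat.factorial (d+1) : ℝ)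
          * (Nat.factorial (d+1) : ℝ) := by field_simp
      _ ≤ M * (Nat.factorial (d+1) : ℝ) := by
          apply mul_le_mul_of_nonneg_right h2 (le_of_lt h3)
      _ = (Nat.factorial (d + 1) : ℝ) * M := mul_comm _ _
  have hdiff : DifferentiableOn ℝ (iteratedDerivWithin d f (Set.Icc a b)) (Set.Icc a b) :=
    hf.differentiableOn_iteratedDerivWithin (by exact_mod_cast (by omega : d < m + 1)) hUD
  have htrans : |iteratedDerivWithin d f (Set.Icc a b) (x 0)
      - iteratedDerivWithin d f (Set.Icc a b) ζ|
      ≤ (Nat.factorial (d + 1) : ℝ) * M * (2 * r) := by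
    have h4 := Convex.norm_image_sub_le_of_norm_derivWithin_le hdiff hderbd
      (convex_Icc a b) hζab (hxab 0)
    rw [Real.norm_eq_abs, Real.norm_eq_abs] at h4
    have h5 : |x 0 - ζ| ≤ 2 * r := by
      have h6 : ζ ≤ v := le_trans hζmem.2 (hxu _).2
      have h7 : x 0 ≤ ζ := by
        have := hζmem.1
        rwa [hy0] at this
      have h8 := (hxu 0).1
      have h9 := (hxu 0).2
      rw [abs_le]
      constructor <;> linarith
    have hMnn : (0:ℝ) ≤ (Nat.factorial (d + 1) : ℝ) * M := by positivity
    calc |iteratedDerivWithin d f (Set.Icc a b) (x 0)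
        - iteratedDerivWithin d f (Set.Icc a b) ζ| ≤ (Nat.factorial (d + 1) : ℝ) * M * |x 0 - ζ| := h4
      _ ≤ (Nat.factorial (d + 1) : ℝ) * M * (2 * r) := by
          apply mul_le_mul_of_nonneg_left h5 hMnn
  -- combine
  have hfin : |iteratedDerivWithin d f (Set.Icc a b) (x 0)|
      ≤ (Nat.factorial d : ℝ) * ((d + 1) * (μ / g ^ d)) + (Nat.factorial (d + 1) : ℝ) * M * (2 * r) := by
    calc |iteratedDerivWithin d f (Set.Icc a b) (x 0)|
        ≤ |iteratedDerivWithin d f (Set.Icc a b) ζ|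
          + |iteratedDerivWithin d f (Set.Icc a b) (x 0)
            - iteratedDerivWithin d f (Set.Icc a b) ζ| := by
          have := abs_sub_abs_le_abs_sub (iteratedDerivWithin d f (Set.Icc a b) (x 0))
            (iteratedDerivWithin d f (Set.Icc a b) ζ)
          linarith [abs_nonneg (iteratedDerivWithin d f (Set.Icc a b) (x 0) - iteratedDerivWithin d f (Set.Icc a b) ζ)]
      _ ≤ _ := add_le_add hζbd htrans
  have hfs : (Nat.factorial (d+1) : ℝ) = (d + 1) * (Nat.factorial d : ℝ) := by
    rw [Nat.factorial_succ]
    push_cast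
    ring
  calc ξ ≤ |iteratedDerivWithin d f (Set.Icc a b) (x 0)| / (Nat.factorial d : ℝ) := hξd
    _ ≤ ((Nat.factorial d : ℝ) * ((d + 1) * (μ / g ^ d)) + (Nat.factorial (d + 1) : ℝ) * M * (2 * r)) / (Nat.factorial d : ℝ) := by
        exact (div_le_div_iff_of_pos_right hfact).mpr hfin
    _ = (d + 1) * μ / g ^ d + (d + 1) * M * (2 * r) := by
        rw [hfs]
        field_simp

set_option maxHeartbeats 1000000 in
lemma num2 (M ξ q r g μ : ℝ) (hξ0 : 0 < ξ) (hξM : ξ ≤ M)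
    (hq0 : 0 < q) (hq1 : q < 1) (hmain : 2 * (M + 1) * q < ξ)
    (hr : r = (3/5) * q^2) (hg : g = 2 * r * q * (M + 1) / ξ) (hμ : μ = q^6)
    (d : ℕ) (hd1 : 1 ≤ d) (hd2 : d ≤ 2) :
    ((d:ℝ) + 1) * μ / g^d + ((d:ℝ) + 1) * M * (2 * r) < ξ := by
  have hM0 : 0 < M := lt_of_lt_of_le hξ0 hξM
  have hM1 : (0:ℝ) < M + 1 := by linarith
  obtain ⟨ρ, hρdef⟩ : ∃ ρ : ℝ, ρ = ξ / (M + 1) := ⟨_, rfl⟩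
  have hξρ : ξ = ρ * (M + 1) := by rw [hρdef]; field_simp
  have hρ0 : 0 < ρ := hρdef ▸ div_pos hξ0 hM1
  have hρ1 : ρ < 1 := by
    rw [hρdef, div_lt_one hM1]; linarith
  have hqρ : q < ρ / 2 := by nlinarith
  have hgq : g = (6/5) * q^3 / ρ := by
    rw [hg, hr, hξρ]
    field_simp
    ring
  have hq2 : q^2 < ρ^2 / 4 := by nlinarith
  have hq3 : q^3 < ρ^3 / 8 := by nlinarith
  have hρM : ρ * (M + 1) ≤ M := by rw [← hξρ]; exact hξM
  have hρ3 : ρ^3 ≤ 1 := by nlinarith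
  have hρ4 : ρ^4 ≤ ρ := by nlinarith
  interval_cases d
  · -- d = 1
    have e1 : (((1:ℕ):ℝ) + 1) * μ / g^1 = (5/3) * ρ * q^3 := by
      rw [hμ, hgq]
      push_cast
      field_simp
      ring
    rw [e1, hr, hξρ]
    have b1 : (5/3) * ρ * q^3 < (5/24) * ρ := by nlinarith
    have b2 : (((1:ℕ):ℝ) + 1) * M * (2 * ((3/5) * q^2)) < (3/5) * M * ρ^2 := by
      push_cast
      nlinarith
    have b3 : (3/5) * M * ρ^2 ≤ (3/5) * M * ρ := by nlinarith
    nlinarith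
  · -- d = 2
    have e1 : (((2:ℕ):ℝ) + 1) * μ / g^2 = (25/12) * ρ^2 := by
      rw [hμ, hgq]
      push_cast
      field_simp
      ring
    rw [e1, hr, hξρ]
    have b2 : (((2:ℕ):ℝ) + 1) * M * (2 * ((3/5) * q^2)) < (9/10) * M * ρ^2 := by
      push_cast
      nlinarith
    have b3 : (25/12) * ρ^2 + (9/10) * M * ρ^2 ≤ ρ * (M + 1) := by
      have h4 : ρ * (M + 1) * ((25/12) + (9/10) * M) ≤ M * ((25/12) + (9/10) * M) := by
        apply mul_le_mul_of_nonneg_right hρM (by positivity)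
      have h5 : M * ((25/12) + (9/10) * M) ≤ (M + 1)^2 := by nlinarith [sq_nonneg (M - 5/12)]
      nlinarith
    linarith


-- nat helper: 2*(m+1) ≤ 2^m for 3 ≤ m
lemma natpow2 : ∀ m : ℕ, 3 ≤ m → 2 * (m + 1) ≤ 2 ^ m := by
  intro m hm
  induction m with
  | zero => omega
  | succ n ih =>
    rcases Nat.lt_or_ge n 3 with h | h
    · interval_cases n <;> simp_all <;> omega
    · have := ih (by omega)
      have h2 : 2 ^ n ≥ 2 := by
        calc 2 ^ n ≥ 2 ^ 1 := Nat.pow_le_pow_right (by norm_num) (by omega)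
          _ = 2 := by norm_num
      rw [pow_succ]
      omega

-- nat helper: 2*(d+1)*(2*(m+1))^d ≤ m^(m*(m+1)-d) for 3 ≤ m, 1 ≤ d ≤ m
lemma natpow3 (m d : ℕ) (hm : 3 ≤ m) (hd1 : 1 ≤ d) (hd2 : d ≤ m) :
    2 * (d + 1) * (2 * (m + 1)) ^ d ≤ m ^ (m * (m + 1) - d) := by
  have h1 : 2 * (m + 1) ≤ m ^ 2 := by nlinarith
  have h2 : 2 * (d + 1) ≤ m ^ 2 := by nlinarith
  calc 2 * (d + 1) * (2 * (m + 1)) ^ d ≤ m ^ 2 * (m ^ 2) ^ d :=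
        Nat.mul_le_mul h2 (Nat.pow_le_pow_left h1 d)
    _ = m ^ (2 + 2 * d) := by rw [← pow_mul, ← pow_add]
    _ ≤ m ^ (m * (m + 1) - d) := by
        apply Nat.pow_le_pow_right (by omega)
        have hK : 2 + 2 * d + d ≤ m * (m + 1) := by nlinarith
        omega

set_option maxHeartbeats 1000000 in
lemma num3 (m : ℕ) (hm : 3 ≤ m) (M ξ q r g μ : ℝ) (hξ0 : 0 < ξ) (hξM : ξ ≤ M)
    (hq0 : 0 < q) (hq1 : q < 1) (hmain : m * (M + 1) * q < ξ)
    (hr : r = min (q ^ m) (ξ / (M + 1) / (4 * (m + 1))))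
    (hg : g = 2 * r * q * (M + 1) / ξ) (hμ : μ = q ^ (m * (m + 1)))
    (d : ℕ) (hd1 : 1 ≤ d) (hd2 : d ≤ m) :
    ((d:ℝ) + 1) * μ / g ^ d + ((d:ℝ) + 1) * M * (2 * r) < ξ := by
  have hM0 : 0 < M := lt_of_lt_of_le hξ0 hξM
  have hM1 : (0:ℝ) < M + 1 := by linarith
  have hm1 : (3:ℝ) ≤ (m:ℝ) := by exact_mod_cast hm
  have hmp : (0:ℝ) < (m:ℝ) + 1 := by linarith
  obtain ⟨ρ, hρdef⟩ : ∃ ρ : ℝ, ρ = ξ / (M + 1) := ⟨_, rfl⟩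
  have hξρ : ξ = ρ * (M + 1) := by rw [hρdef]; field_simp
  have hρ0 : 0 < ρ := hρdef ▸ div_pos hξ0 hM1
  have hρ1 : ρ < 1 := by rw [hρdef, div_lt_one hM1]; linarith
  have hqρ : (m:ℝ) * q < ρ := by nlinarith
  have hr' : r = min (q ^ m) (ρ / (4 * (m + 1))) := by rw [hr, hρdef]
  have hr0 : 0 < r := by
    rw [hr']
    exact lt_min (pow_pos hq0 m) (by positivity)
  have hrρ : r ≤ ρ / (4 * ((m:ℝ) + 1)) := hr' ▸ min_le_right _ _
  -- second term bound
  have hsecond : ((d:ℝ) + 1) * M * (2 * r) < ξ / 2 := by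
    have hdm : ((d:ℝ) + 1) ≤ (m:ℝ) + 1 := by
      have : (d:ℝ) ≤ (m:ℝ) := by exact_mod_cast hd2
      linarith
    have h1 : ((d:ℝ) + 1) * M * (2 * r) ≤ ((m:ℝ) + 1) * M * (2 * (ρ / (4 * ((m:ℝ) + 1)))) := by
      apply mul_le_mul (mul_le_mul hdm (le_refl M) hM0.le (by linarith)) (by linarith) (by linarith [hr0]) (by positivity)
    have h2 : ((m:ℝ) + 1) * M * (2 * (ρ / (4 * ((m:ℝ) + 1)))) = M * ρ / 2 := by
      field_simp
      ring
    have h3 : M * ρ / 2 < (M + 1) * ρ / 2 := by nlinarith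
    rw [hξρ]
    calc ((d:ℝ) + 1) * M * (2 * r) ≤ M * ρ / 2 := h2 ▸ h1
      _ < (M + 1) * ρ / 2 := h3
      _ = ρ * (M + 1) / 2 := by ring
  -- first term bound
  have hfirst : ((d:ℝ) + 1) * μ / g ^ d ≤ ξ / 2 := by
    have hgρ : g = 2 * r * q / ρ := by
      rw [hg, hξρ]
      field_simp
    rcases le_total (q ^ m) (ρ / (4 * ((m:ℝ) + 1))) with hc | hc
    · -- r = q^m
      have hrq : r = q ^ m := by rw [hr']; exact min_eq_left hc
      have hgq : g = 2 * q ^ (m + 1) / ρ := by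
        rw [hgρ, hrq, pow_succ]
        ring_nf
      have hgd : g ^ d = 2 ^ d * q ^ ((m + 1) * d) / ρ ^ d := by
        rw [hgq, div_pow, mul_pow, ← pow_mul]
      have hexp : (m - d) * (m + 1) + (m + 1) * d = m * (m + 1) := by
        rw [mul_comm (m + 1) d, ← add_mul, Nat.sub_add_cancel hd2]
      have hμsplit : μ = q ^ ((m - d) * (m + 1)) * q ^ ((m + 1) * d) := by
        rw [hμ, ← pow_add, hexp]
      have heq : ((d:ℝ) + 1) * μ / g ^ d
          = ((d:ℝ) + 1) * ρ ^ d * q ^ ((m - d) * (m + 1)) / 2 ^ d := by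
        rw [hμsplit, hgd]
        rw [div_div_eq_mul_div]
        rw [div_eq_div_iff (by positivity) (by positivity)]
        ring
      rw [heq, hξρ]
      rcases eq_or_lt_of_le hd2 with hdm | hdm
      · subst hdm
        simp only [Nat.sub_self, zero_mul, pow_zero, mul_one]
        have hp2 : (2:ℝ) * ((d:ℝ) + 1) ≤ 2 ^ d := by
          have := natpow2 d hm
          have h' : ((2 * (d + 1) : ℕ) : ℝ) ≤ ((2 ^ d : ℕ) : ℝ) := by exact_mod_cast this
          push_cast at h'
          linarith
        have hρm : ρ ^ d ≤ ρ := by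
          calc ρ ^ d ≤ ρ ^ 1 := pow_le_pow_of_le_one hρ0.le hρ1.le (by omega)
            _ = ρ := pow_one ρ
        rw [div_le_div_iff₀ (by positivity) (by norm_num : (0:ℝ) < 2)]
        have hx1 : (2:ℝ) * ((d:ℝ) + 1) * ρ ^ d ≤ 2 ^ d * ρ ^ d :=
          mul_le_mul_of_nonneg_right hp2 (pow_nonneg hρ0.le d)
        have hx2 : (2:ℝ) ^ d * ρ ^ d ≤ 2 ^ d * ρ :=
          mul_le_mul_of_nonneg_left hρm (by positivity)
        nlinarith [pow_pos (show (0:ℝ) < 2 by norm_num) d, mul_nonneg (pow_nonneg (show (0:ℝ) ≤ 2 by norm_num) d) hρ0.le]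
      · -- d < m
        have hE1 : 1 ≤ (m - d) * (m + 1) := by
          have h1 : 1 ≤ m - d := by omega
          calc 1 = 1 * 1 := by norm_num
            _ ≤ (m - d) * (m + 1) := Nat.mul_le_mul h1 (by omega)
        have hqE : q ^ ((m - d) * (m + 1)) ≤ q := by
          calc q ^ ((m - d) * (m + 1)) ≤ q ^ 1 := pow_le_pow_of_le_one hq0.le hq1.le hE1
            _ = q := pow_one q
        have hd2d : ((d:ℝ) + 1) ≤ 2 ^ d := by
          have : d < 2 ^ d := Nat.lt_two_pow_self
          have h' : ((d + 1 : ℕ) : ℝ) ≤ ((2 ^ d : ℕ) : ℝ) := by exact_mod_cast this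
          push_cast at h'
          linarith
        have hρd : ρ ^ d ≤ 1 := pow_le_one₀ hρ0.le hρ1.le
        rw [div_le_div_iff₀ (by positivity) (by norm_num : (0:ℝ) < 2)]
        have hXq : ((d:ℝ) + 1) * ρ ^ d * q ^ ((m - d) * (m + 1)) ≤ 2 ^ d * q := by
          have s1 : ((d:ℝ) + 1) * ρ ^ d ≤ 2 ^ d := by nlinarith [pow_nonneg hρ0.le d]
          have s2 : (0:ℝ) ≤ q ^ ((m - d) * (m + 1)) := by positivity
          nlinarith [pow_pos (show (0:ℝ) < 2 by norm_num) d]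
        have h2q : 2 * q ≤ ρ * (M + 1) := by nlinarith
        nlinarith [pow_pos (show (0:ℝ) < 2 by norm_num) d, mul_nonneg (pow_nonneg (show (0:ℝ) ≤ 2 by norm_num) d) hq0.le]
    · -- r = ρ/(4(m+1))
      have hrq : r = ρ / (4 * ((m:ℝ) + 1)) := by rw [hr']; exact min_eq_right hc
      have hgB : g = q / (2 * ((m:ℝ) + 1)) := by
        rw [hgρ, hrq]
        field_simp
        ring
      have hdK : d ≤ m * (m + 1) := le_trans hd2 (Nat.le_mul_of_pos_right m (by omega))
      have hμsplit : μ = q ^ (m * (m + 1) - d) * q ^ d := by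
        rw [hμ, ← pow_add]
        congr 1
        omega
      have heq : ((d:ℝ) + 1) * μ / g ^ d
          = ((d:ℝ) + 1) * (2 * ((m:ℝ) + 1)) ^ d * q ^ (m * (m + 1) - d) := by
        rw [hμsplit, hgB, div_pow]
        rw [div_div_eq_mul_div]
        rw [div_eq_iff (by positivity)]
        ring
      rw [heq, hξρ]
      have hqm' : q ≤ ρ / (m:ℝ) := by
        rw [le_div_iff₀ (by linarith : (0:ℝ) < (m:ℝ))]
        nlinarith
      have hpow : q ^ (m * (m + 1) - d) ≤ ρ ^ (m * (m + 1) - d) / (m:ℝ) ^ (m * (m + 1) - d) := by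
        calc q ^ (m * (m + 1) - d) ≤ (ρ / (m:ℝ)) ^ (m * (m + 1) - d) :=
              pow_le_pow_left₀ hq0.le hqm' _
          _ = ρ ^ (m * (m + 1) - d) / (m:ℝ) ^ (m * (m + 1) - d) := div_pow _ _ _
      have hEB : 1 ≤ m * (m + 1) - d := by
        have : m + 1 ≤ m * (m + 1) := Nat.le_mul_of_pos_left (m + 1) (by omega)
        omega
      have hρB : ρ ^ (m * (m + 1) - d) ≤ ρ := by
        calc ρ ^ (m * (m + 1) - d) ≤ ρ ^ 1 := pow_le_pow_of_le_one hρ0.le hρ1.le hEB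
          _ = ρ := pow_one ρ
      have hC : (2:ℝ) * ((d:ℝ) + 1) * (2 * ((m:ℝ) + 1)) ^ d ≤ (m:ℝ) ^ (m * (m + 1) - d) := by
        have := natpow3 m d hm hd1 hd2
        have h' : ((2 * (d + 1) * (2 * (m + 1)) ^ d : ℕ) : ℝ) ≤ ((m ^ (m * (m + 1) - d) : ℕ) : ℝ) := by
          exact_mod_cast this
        push_cast at h'
        linarith
      -- combine
      have hmK : (0:ℝ) < (m:ℝ) ^ (m * (m + 1) - d) := pow_pos (by linarith) _
      have hXpos : (0:ℝ) ≤ ((d:ℝ) + 1) * (2 * ((m:ℝ) + 1)) ^ d := by positivity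
      have step1 : ((d:ℝ) + 1) * (2 * ((m:ℝ) + 1)) ^ d * q ^ (m * (m + 1) - d)
          ≤ ((d:ℝ) + 1) * (2 * ((m:ℝ) + 1)) ^ d * (ρ / (m:ℝ) ^ (m * (m + 1) - d)) := by
        apply mul_le_mul_of_nonneg_left _ hXpos
        calc q ^ (m * (m + 1) - d) ≤ ρ ^ (m * (m + 1) - d) / (m:ℝ) ^ (m * (m + 1) - d) := hpow
          _ ≤ ρ / (m:ℝ) ^ (m * (m + 1) - d) := (div_le_div_iff_of_pos_right hmK).mpr hρB
      have step2 : ((d:ℝ) + 1) * (2 * ((m:ℝ) + 1)) ^ d * (ρ / (m:ℝ) ^ (m * (m + 1) - d)) ≤ ρ / 2 := by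
        rw [← mul_div_assoc, div_le_div_iff₀ hmK (by norm_num : (0:ℝ) < 2)]
        nlinarith [hC, hρ0.le, mul_le_mul_of_nonneg_right hC hρ0.le]
      have step3 : ρ / 2 ≤ ρ * (M + 1) / 2 := by nlinarith
      linarith
  linarith
set_option maxHeartbeats 2000000 in
theorem stmt_12 (m : ℕ) (hm : 1 ≤ m) (a b : ℝ) (hab : a < b) (f : ℝ → ℝ)
    (hf : ContDiffOn ℝ (m + 1 : ℕ) f (Set.Icc a b))
    (ξ M : ℝ) (hξ : 0 < ξ)
    (hξ' : ∀ x ∈ Set.Icc a b, ∃ d : ℕ, 1 ≤ d ∧ d ≤ m ∧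
      ξ ≤ |iteratedDerivWithin d f (Set.Icc a b) x| / (Nat.factorial d : ℝ))
    (hM : ∀ x ∈ Set.Icc a b, ∀ d : ℕ, 2 ≤ d → d ≤ m + 1 →
      |iteratedDerivWithin d f (Set.Icc a b) x| / (Nat.factorial d : ℝ) ≤ M)
    (μ : ℝ) (hμ0 : 0 < μ) (hμ1 : μ < 1) :
    MeasureTheory.volume {x ∈ Set.Icc a b | |f x| ≤ μ} ≤
      ENNReal.ofReal
        ((m * (M + 1) * (b - a + 2 * μ ^ ((1 : ℝ) / (m + 1))) / ξ) *
          μ ^ ((1 : ℝ) / (m * (m + 1)))) := by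
  have hba : (0:ℝ) ≤ b - a := by linarith
  have hmR : (1:ℝ) ≤ (m:ℝ) := by exact_mod_cast hm
  have hM0 : 0 ≤ M := le_trans (div_nonneg (abs_nonneg _) (by positivity))
    (hM a ⟨le_refl a, le_of_lt hab⟩ 2 (le_refl 2) (by omega))
  have hM1 : (0:ℝ) < M + 1 := by linarith
  set E : Set ℝ := {x ∈ Set.Icc a b | |f x| ≤ μ} with hE
  have hEsub : E ⊆ Set.Icc a b := fun x hx => hx.1
  have hEclosed : IsClosed E := by
    have heq : E = Set.Icc a b ∩ f ⁻¹' (Set.Icc (-μ) μ) := by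
      ext x
      simp [hE, abs_le, and_assoc]
    rw [heq]
    exact hf.continuousOn.preimage_isClosed_of_isClosed isClosed_Icc isClosed_Icc
  have hEμ : ∀ x ∈ E, |f x| ≤ μ := fun x hx => hx.2
  set q : ℝ := μ ^ ((1 : ℝ) / (m * (m + 1))) with hqdef
  have hq0 : 0 < q := Real.rpow_pos_of_pos hμ0 _
  have hq1 : q < 1 := Real.rpow_lt_one hμ0.le hμ1 (by positivity)
  have hqμ : q ^ (m * (m + 1)) = μ := by
    rw [hqdef, ← Real.rpow_natCast (μ ^ ((1 : ℝ) / (m * (m + 1)))) (m * (m + 1)),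
      ← Real.rpow_mul hμ0.le]
    rw [show (1 : ℝ) / ((m:ℝ) * ((m:ℝ) + 1)) * ((m * (m + 1) : ℕ) : ℝ) = 1 by
      push_cast; field_simp]
    exact Real.rpow_one μ
  have hqm : μ ^ ((1 : ℝ) / ((m:ℝ) + 1)) = q ^ m := by
    rw [hqdef, ← Real.rpow_natCast (μ ^ ((1 : ℝ) / (m * (m + 1)))) m, ← Real.rpow_mul hμ0.le]
    congr 1
    first
    | (field_simp; ring)
    | field_simp
  rw [hqm]
  have hqmpos : 0 < q ^ m := pow_pos hq0 m
  have hpow_mono : q ^ (m * (m + 1)) ≤ q ^ (m + 1) := by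
    apply pow_le_pow_of_le_one hq0.le hq1.le
    nlinarith [Nat.one_le_iff_ne_zero.mp hm]
  have hμqm : μ ≤ q ^ m * q := by
    rw [← hqμ]
    calc q ^ (m * (m + 1)) ≤ q ^ (m + 1) := hpow_mono
      _ = q ^ m * q := pow_succ q m
  have hm1M : (1:ℝ) ≤ (m:ℝ) * (M + 1) := by nlinarith
  by_cases hA : m = 1 ∨ M < ξ
  -- CASE 1: first derivative everywhere ≥ ξ
  · have hd1all : ∀ x ∈ Set.Icc a b, ξ ≤ |iteratedDerivWithin 1 f (Set.Icc a b) x| := by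
      intro x hx
      obtain ⟨d, hd1, hd2, hξd⟩ := hξ' x hx
      have hd : d = 1 := by
        rcases hA with h1 | h2
        · omega
        · by_contra hne
          have := hM x hx d (by omega) (by omega)
          linarith
      subst hd
      simpa using hξd
    rcases Set.eq_empty_or_nonempty E with hemp | hne
    · rw [hemp]
      simp
    have hbdd : BddBelow E := ⟨a, fun x hx => (hEsub hx).1⟩
    have hx0 : sInf E ∈ E := hEclosed.csInf_mem hne hbdd
    have hdiam : ∀ y ∈ E, y ≤ sInf E + 2 * μ / ξ := by
      intro y hy
      have hx0y : sInf E ≤ y := csInf_le hbdd hy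
      rcases eq_or_lt_of_le hx0y with heq | hlt
      · rw [← heq]
        have : 0 ≤ 2 * μ / ξ := by positivity
        linarith
      · have hccont : ContinuousOn f (Set.Icc (sInf E) y) :=
          hf.continuousOn.mono (Set.Icc_subset_Icc (hEsub hx0).1 (hEsub hy).2)
        have hder : ∀ t ∈ Set.Ioo (sInf E) y,
            HasDerivAt f (iteratedDerivWithin 1 f (Set.Icc a b) t) t := by
          intro t ht
          have hta : a < t := lt_of_le_of_lt (hEsub hx0).1 ht.1
          have htb : t < b := lt_of_lt_of_le ht.2 (hEsub hy).2
          have htIcc : t ∈ Set.Icc a b := ⟨hta.le, htb.le⟩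
          have hnh : Set.Icc a b ∈ nhds t := Icc_mem_nhds hta htb
          have hdiff : DifferentiableOn ℝ f (Set.Icc a b) :=
            hf.differentiableOn (by simp)
          have h2 : DifferentiableAt ℝ f t := (hdiff t htIcc).differentiableAt hnh
          have h3 : iteratedDerivWithin 1 f (Set.Icc a b) t = deriv f t := by
            rw [iteratedDerivWithin_one]
            exact derivWithin_of_mem_nhds hnh
          rw [h3]
          exact h2.hasDerivAt
        obtain ⟨c, hc, hceq⟩ := exists_hasDerivAt_eq_slope f _ hlt hccont hder
        have hcab : c ∈ Set.Icc a b :=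
          ⟨le_trans (hEsub hx0).1 hc.1.le, le_trans hc.2.le (hEsub hy).2⟩
        have h4 := hd1all c hcab
        rw [hceq] at h4
        have h5 : |f y - f (sInf E)| ≤ 2 * μ := by
          have hy1 := abs_le.mp (hEμ y hy)
          have hy2 := abs_le.mp (hEμ _ hx0)
          rw [abs_le]
          constructor <;> linarith [hy1.1, hy1.2, hy2.1, hy2.2]
        have h6 : 0 < y - sInf E := by linarith
        rw [abs_div, abs_of_pos h6, le_div_iff₀ h6] at h4
        have h7 : ξ * (y - sInf E) ≤ 2 * μ := le_trans h4 h5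
        have h8 : y - sInf E ≤ 2 * μ / ξ := by
          rw [le_div_iff₀ hξ]
          nlinarith
        linarith
    have hsubI : E ⊆ Set.Icc (sInf E) (sInf E + 2 * μ / ξ) :=
      fun y hy => ⟨csInf_le hbdd hy, hdiam y hy⟩
    calc MeasureTheory.volume E ≤ MeasureTheory.volume (Set.Icc (sInf E) (sInf E + 2 * μ / ξ)) :=
          measure_mono hsubI
      _ = ENNReal.ofReal (sInf E + 2 * μ / ξ - sInf E) := Real.volume_Icc
      _ ≤ _ := by
          apply ENNReal.ofReal_le_ofReal
          have e0 : sInf E + 2 * μ / ξ - sInf E = 2 * μ / ξ := by ring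
          rw [e0, div_mul_eq_mul_div, div_le_div_iff₀ hξ hξ]
          have key : 2 * μ ≤ (m:ℝ) * (M + 1) * (b - a + 2 * q ^ m) * q := by
            have k1 : 2 * (q ^ m * q) ≤ (m:ℝ) * (M + 1) * (2 * q ^ m * q) := by
              nlinarith [mul_pos hqmpos hq0]
            nlinarith [mul_nonneg (mul_nonneg (by positivity : (0:ℝ) ≤ (m:ℝ) * (M + 1)) hba) hq0.le]
          nlinarith
  -- CASE 2
  · push_neg at hA
    obtain ⟨hm2, hξM⟩ := hA
    have hm2' : 2 ≤ m := by omega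
    by_cases htriv : ξ ≤ (m:ℝ) * (M + 1) * q
    -- trivial case : bound by b - a
    · calc MeasureTheory.volume E ≤ MeasureTheory.volume (Set.Icc a b) := measure_mono hEsub
        _ = ENNReal.ofReal (b - a) := Real.volume_Icc
        _ ≤ _ := by
            apply ENNReal.ofReal_le_ofReal
            rw [div_mul_eq_mul_div, le_div_iff₀ hξ]
            nlinarith [mul_le_mul_of_nonneg_left htriv hba,
              mul_pos (mul_pos (mul_pos (by linarith : (0:ℝ) < (m:ℝ)) hM1) hqmpos) hq0]
    -- main case
    · push_neg at htriv
      set r : ℝ := if m = 2 then (3/5) * q^2 else min (q ^ m) (ξ / (M + 1) / (4 * ((m:ℝ) + 1))) with hrdef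
      have hr0 : 0 < r := by
        rw [hrdef]
        split_ifs
        · positivity
        · exact lt_min (pow_pos hq0 m) (by positivity)
      have hrqm : r ≤ q ^ m := by
        rw [hrdef]
        split_ifs with h
        · rw [h]
          nlinarith [sq_nonneg q, pow_pos hq0 2]
        · exact min_le_left _ _
      set g : ℝ := 2 * r * q * (M + 1) / ξ with hgdef
      have hg0 : 0 < g := by
        rw [hgdef]
        exact div_pos (by positivity) hξ
      have hnum : ∀ d : ℕ, 1 ≤ d → d ≤ m →
          ((d:ℝ) + 1) * μ / g ^ d + ((d:ℝ) + 1) * M * (2 * r) < ξ := by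
        intro d hd1 hd2
        rcases Nat.lt_or_ge m 3 with h3 | h3
        · have hm2'' : m = 2 := by omega
          apply num2 M ξ q r g μ hξ hξM hq0 hq1
          · have : ((m:ℝ)) = 2 := by exact_mod_cast hm2''
            rw [this] at htriv
            linarith
          · rw [hrdef, if_pos hm2'']
          · rw [hgdef]
          · rw [← hqμ, hm2'']
          · exact hd1
          · omega
        · apply num3 m h3 M ξ q r g μ hξ hξM hq0 hq1 htriv
          · rw [hrdef, if_neg (by omega)]
          · rw [hgdef]
          · rw [← hqμ]
          · exact hd1
          · exact hd2
      -- per-interval bound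
      have hPI : ∀ u : ℝ, MeasureTheory.volume (E ∩ Set.Icc u (u + 2 * r)) ≤
          ENNReal.ofReal ((m:ℝ) * g) := by
        intro u
        have hSclosed : IsClosed (E ∩ Set.Icc u (u + 2 * r)) := hEclosed.inter isClosed_Icc
        have hSbdd : BddBelow (E ∩ Set.Icc u (u + 2 * r)) := ⟨u, fun x hx => hx.2.1⟩
        rcases greedy hg0 m (E ∩ Set.Icc u (u + 2 * r)) hSclosed hSbdd with h | ⟨x, hx1, hx2⟩
        · exact h
        · exfalso
          obtain ⟨d, hd1, hd2, hledge⟩ := keyest m a b hab f hf ξ M μ hξ' hM hM0 g r hg0 hr0.le x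
            (fun i => ((hx1 i).1).1) (fun i => ((hx1 i).1).2) hx2 u (u + 2 * r)
            (fun i => (hx1 i).2) (by linarith)
          exact absurd hledge (not_le.mpr (hnum d hd1 hd2))
      -- covering
      set N : ℕ := ⌊(b - a) / (2 * r)⌋₊ + 1 with hNdef
      have h2r : (0:ℝ) < 2 * r := by linarith
      have hcov : E ⊆ ⋃ i ∈ Finset.range N, (E ∩ Set.Icc (a + 2 * r * i) (a + 2 * r * i + 2 * r)) := by
        intro x hx
        have hxab := hEsub hx
        have hxa : 0 ≤ x - a := by linarith [hxab.1]
        have hi1 : ((⌊(x - a) / (2 * r)⌋₊ : ℕ) : ℝ) ≤ (x - a) / (2 * r) :=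
          Nat.floor_le (by positivity)
        have hi2 : (x - a) / (2 * r) < (⌊(x - a) / (2 * r)⌋₊ : ℕ) + 1 := by
          exact_mod_cast Nat.lt_succ_floor _
        have hiN : ⌊(x - a) / (2 * r)⌋₊ < N := by
          rw [hNdef]
          have : ⌊(x - a) / (2 * r)⌋₊ ≤ ⌊(b - a) / (2 * r)⌋₊ :=
            Nat.floor_le_floor ((div_le_div_iff_of_pos_right h2r).mpr (by linarith [hxab.2]))
          omega
        apply Set.mem_biUnion (Finset.mem_range.mpr hiN)
        refine ⟨hx, ?_, ?_⟩
        · have := (le_div_iff₀ h2r).mp hi1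
          linarith
        · have := (div_lt_iff₀ h2r).mp hi2
          linarith
      calc MeasureTheory.volume E
          ≤ MeasureTheory.volume (⋃ i ∈ Finset.range N,
            (E ∩ Set.Icc (a + 2 * r * i) (a + 2 * r * i + 2 * r))) := measure_mono hcov
        _ ≤ ∑ i ∈ Finset.range N, MeasureTheory.volume
            (E ∩ Set.Icc (a + 2 * r * i) (a + 2 * r * i + 2 * r)) :=
            measure_biUnion_finset_le _ _
        _ ≤ ∑ _i ∈ Finset.range N, ENNReal.ofReal ((m:ℝ) * g) :=
            Finset.sum_le_sum (fun i _ => hPI _)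
        _ = N * ENNReal.ofReal ((m:ℝ) * g) := by
            rw [Finset.sum_const, Finset.card_range, nsmul_eq_mul]
        _ = ENNReal.ofReal ((N:ℝ) * ((m:ℝ) * g)) := by
            rw [← ENNReal.ofReal_natCast N, ← ENNReal.ofReal_mul (by positivity)]
        _ ≤ _ := by
            apply ENNReal.ofReal_le_ofReal
            have hN : (N:ℝ) ≤ (b - a) / (2 * r) + 1 := by
              rw [hNdef]
              push_cast
              have := Nat.floor_le (show (0:ℝ) ≤ (b - a) / (2 * r) by positivity)
              linarith
            have step1 : (N:ℝ) * ((m:ℝ) * g) ≤ ((b - a) / (2 * r) + 1) * ((m:ℝ) * g) := by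
              apply mul_le_mul_of_nonneg_right hN (by positivity)
            have e2 : ((b - a) / (2 * r) + 1) * ((m:ℝ) * g)
                = (m:ℝ) * (M + 1) * (b - a + 2 * r) / ξ * q := by
              rw [hgdef]
              field_simp
            have step2 : (m:ℝ) * (M + 1) * (b - a + 2 * r) / ξ * q
                ≤ (m:ℝ) * (M + 1) * (b - a + 2 * q ^ m) / ξ * q := by
              apply mul_le_mul_of_nonneg_right _ hq0.le
              exact (div_le_div_iff_of_pos_right hξ).mpr
                (mul_le_mul_of_nonneg_left (by linarith) (by positivity))
            linarith [e2 ▸ step1]
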